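/- Let v = (1,0,−m), m ≥ 1, in the Mukai lattice of a K3 surface, and let v₀ = (r, L, rm) ∈ v^⊥ with ⟨v₀,v₀⟩ = −2, i.e. L·L = 2r²m − 2. If L is not divisible by 2 in H^2(S,Z), then the rank-2 sublattice span_Z{v, v₀} is a primitive sublattice of the Mukai lattice. -/

import Mathlib

/-- The Mukai pairing on `ℤ ⊕ M ⊕ ℤ`. -/
def mukaiForm {R : Type} [CommRing R] {M : Type} [AddCommGroup M] [Module R M]
    (B : M →ₗ[R] M →ₗ[R] R) : (R × M × R) →ₗ[R] (R × M × R) →ₗ[R] R :=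
  LinearMap.mk₂ R (fun x y => B x.2.1 y.2.1 - x.1 * y.2.2 - y.1 * x.2.2)
    (fun x x' y => by simp [add_mul]; ring)
    (fun c x y => by simp [smul_eq_mul]; ring)
    (fun x y y' => by simp [mul_add]; ring)
    (fun c x y => by simp [smul_eq_mul]; ring)

/-- Auxiliary: the prime case, with the canonical `ℤ`-module structure. -/
theorem span_v_v0_prime_aux
    (m : ℤ)
    {M : Type} [AddCommGroup M] [Module.Free ℤ M]
    (B : M →ₗ[ℤ] M →ₗ[ℤ] ℤ)
    (r : ℤ) (L : M)
    (hBLL : B L L = 2 * r ^ 2 * m - 2)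
    (hL2 : ¬ ∃ L₀ : M, L = (2 : ℤ) • L₀)
    (p : ℤ) (hp : Prime p) (x : ℤ × M × ℤ)
    (hx : p • x ∈ Submodule.span ℤ ({((1 : ℤ), (0 : M), -m), ((r, L, r * m) : ℤ × M × ℤ)} : Set (ℤ × M × ℤ))) :
    x ∈ Submodule.span ℤ ({((1 : ℤ), (0 : M), -m), ((r, L, r * m) : ℤ × M × ℤ)} : Set (ℤ × M × ℤ)) := by
  haveI : Module.IsTorsionFree ℤ M := inferInstance
  obtain ⟨a, b, hab⟩ := Submodule.mem_span_pair.mp hx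
  obtain ⟨x₁, x₂, x₃⟩ := x
  simp only [Prod.smul_mk, Prod.mk_add_mk, Prod.mk.injEq, smul_eq_mul, smul_zero,
    zero_add] at hab
  obtain ⟨h1, h2, h3⟩ := hab
  by_cases hpb : p ∣ b
  · obtain ⟨d, rfl⟩ := hpb
    have hpa : p ∣ a := ⟨x₁ - d * r, by linear_combination h1⟩
    obtain ⟨c, rfl⟩ := hpa
    refine Submodule.mem_span_pair.mpr ⟨c, d, ?_⟩
    have e1 : c * 1 + d * r = x₁ :=
      mul_left_cancel₀ hp.ne_zero (by linear_combination h1)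
    have e2 : c • (0 : M) + d • L = x₂ := by
      rw [smul_zero, zero_add]
      refine smul_right_injective M hp.ne_zero ?_
      show p • (d • L) = p • x₂
      rw [smul_smul]
      simpa using h2
    have e3 : c * -m + d * (r * m) = x₃ :=
      mul_left_cancel₀ hp.ne_zero (by linear_combination h3)
    simp only [Prod.smul_mk, Prod.mk_add_mk, smul_eq_mul]
    exact Prod.ext e1 (Prod.ext e2 e3)
  · -- `p` does not divide `b`; derive that `L` is divisible by `p`.
    have hcop : IsCoprime p b := (hp.coprime_iff_not_dvd).mpr hpb
    obtain ⟨u, v, huv⟩ := hcop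
    have hLp : L = p • ((u • L) + (v • x₂)) := by
      linear_combination (norm := module) v • h2 - huv • L
    set L₀ := (u • L) + (v • x₂) with hL₀
    have hp2 : ¬ (2 : ℤ) ∣ p := by
      rintro ⟨q, hq⟩
      exact hL2 ⟨q • L₀, by rw [hLp, hq, mul_smul]⟩
    have hpd2 : ¬ p ∣ 2 := by
      intro h
      have h2' : p.natAbs ∣ 2 := by
        have := Int.natAbs_dvd_natAbs.mpr h
        simpa using this
      have : p.natAbs = 2 :=
        (Nat.prime_dvd_prime_iff_eq (Int.prime_iff_natAbs_prime.mp hp) Nat.prime_two).mp h2'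
      apply hp2
      have : ((2 : ℕ) : ℤ) ∣ p := by
        rw [← this]
        exact Int.natAbs_dvd.mpr dvd_rfl
      simpa using this
    have hdvd : p ∣ 2 * b * r * m := ⟨x₃ + x₁ * m, by linear_combination m * h1 + h3⟩
    have hor : p ∣ r ∨ p ∣ m := by
      rcases hp.dvd_mul.mp hdvd with h | h
      · rcases hp.dvd_mul.mp h with h' | h'
        · rcases hp.dvd_mul.mp h' with h'' | h''
          · exact (hpd2 h'').elim
          · exact (hpb h'').elim
        · exact Or.inl h'
      · exact Or.inr h
    have hB : B L L = p ^ 2 * B L₀ L₀ := by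
      rw [hLp]
      simp only [map_smul, LinearMap.smul_apply, smul_eq_mul]
      ring
    have hpd : p ∣ 2 * (r ^ 2 * m - 1) :=
      ⟨p * B L₀ L₀, by linear_combination hB - hBLL⟩
    have hpr2 : p ∣ r ^ 2 * m - 1 := by
      rcases hp.dvd_mul.mp hpd with h | h
      · exact (hpd2 h).elim
      · exact h
    have hr2m : p ∣ r ^ 2 * m := by
      rcases hor with h | h
      · exact h.trans ⟨r * m, by ring⟩
      · exact h.trans ⟨r ^ 2, by ring⟩
    have hone : p ∣ 1 := by
      have := hr2m.sub hpr2
      simpa using this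
    exact (hp.not_unit (isUnit_of_dvd_one hone)).elim

theorem span_v_v0_aux
    (m : ℤ)
    {M : Type} [AddCommGroup M] [inst : Module ℤ M] [Module.Free ℤ M]
    (B : M →ₗ[ℤ] M →ₗ[ℤ] ℤ)
    (r : ℤ) (L : M)
    (hv₀ : mukaiForm B ((r, L, r * m) : ℤ × M × ℤ) ((r, L, r * m) : ℤ × M × ℤ) = -2)
    (hL2 : ¬ ∃ L₀ : M, L = (2 : ℤ) • L₀) :
    ∀ (n : ℤ) (x : ℤ × M × ℤ), n ≠ 0 →
      n • x ∈ Submodule.span ℤ ({((1 : ℤ), (0 : M), -m), ((r, L, r * m) : ℤ × M × ℤ)} : Set (ℤ × M × ℤ)) →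
      x ∈ Submodule.span ℤ ({((1 : ℤ), (0 : M), -m), ((r, L, r * m) : ℤ × M × ℤ)} : Set (ℤ × M × ℤ)) := by
  obtain rfl : inst = AddCommGroup.toIntModule M :=
    @Subsingleton.elim _ (@Unique.instSubsingleton _ AddCommGroup.uniqueIntModule) _ _
  have hBLL : B L L = 2 * r ^ 2 * m - 2 := by
    have h := hv₀
    simp only [mukaiForm, LinearMap.mk₂_apply] at h
    linear_combination h
  have key : ∀ N : ℕ, ∀ n : ℤ, n.natAbs = N → n ≠ 0 → ∀ x : ℤ × M × ℤ,
      n • x ∈ Submodule.span ℤ ({((1 : ℤ), (0 : M), -m), ((r, L, r * m) : ℤ × M × ℤ)} : Set (ℤ × M × ℤ)) →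
      x ∈ Submodule.span ℤ ({((1 : ℤ), (0 : M), -m), ((r, L, r * m) : ℤ × M × ℤ)} : Set (ℤ × M × ℤ)) := by
    intro N
    induction N using Nat.strong_induction_on with
    | _ N ih =>
      intro n hN hn x hx
      rcases eq_or_ne n.natAbs 1 with h1 | h1
      · rcases Int.natAbs_eq_iff.mp h1 with rfl | rfl
        · simpa using hx
        · have hx' : -((-1 : ℤ) • x) ∈ Submodule.span ℤ
              ({((1 : ℤ), (0 : M), -m), ((r, L, r * m) : ℤ × M × ℤ)} : Set (ℤ × M × ℤ)) :=
            neg_mem hx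
          simpa using hx'
      · obtain ⟨p, hp, k, rfl⟩ := Int.exists_prime_and_dvd h1
        have hk : k ≠ 0 := by rintro rfl; simp at hn
        have hpk : (p * k) • x = p • (k • x) := mul_smul p k x
        have hkx : k • x ∈ Submodule.span ℤ
            ({((1 : ℤ), (0 : M), -m), ((r, L, r * m) : ℤ × M × ℤ)} : Set (ℤ × M × ℤ)) := by
          refine span_v_v0_prime_aux m B r L hBLL hL2 p hp (k • x) ?_
          rwa [← hpk]
        refine ih k.natAbs ?_ k rfl hk x hkx
        rw [← hN, Int.natAbs_mul]
        have hp2 : 2 ≤ p.natAbs := (Int.prime_iff_natAbs_prime.mp hp).two_le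
        have hk1 : 1 ≤ k.natAbs := Int.natAbs_pos.mpr hk
        calc k.natAbs = 1 * k.natAbs := (one_mul _).symm
          _ < p.natAbs * k.natAbs := (Nat.mul_lt_mul_right (by omega)).mpr (by omega)
  intro n x hn hx
  exact key n.natAbs n rfl hn x hx

/-- let `v = (1,0,−m)` and `v₀ = (r,L,rm) ∈ v^⊥` with `⟨v₀,v₀⟩ = −2`.
If `L` is not divisible by `2` in `H²`, then `span_ℤ{v, v₀}` is a primitive
sublattice of the Mukai lattice (the quotient is torsion-free). -/
theorem span_v_v0_primitive
    (m : ℤ) (hm : 1 ≤ m)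
    {M : Type} [AddCommGroup M] [Module ℤ M] [Module.Free ℤ M] [Module.Finite ℤ M]
    (B : M →ₗ[ℤ] M →ₗ[ℤ] ℤ) (hsymm : ∀ x y, B x y = B y x)
    (r : ℤ) (L : M)
    (hv₀ : mukaiForm B ((r, L, r * m) : ℤ × M × ℤ) ((r, L, r * m) : ℤ × M × ℤ) = -2)
    (hL2 : ¬ ∃ L₀ : M, L = (2 : ℤ) • L₀) :
    ∀ (n : ℤ) (x : ℤ × M × ℤ), n ≠ 0 →
      n • x ∈ Submodule.span ℤ ({((1 : ℤ), (0 : M), -m), ((r, L, r * m) : ℤ × M × ℤ)} : Set (ℤ × M × ℤ)) →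
      x ∈ Submodule.span ℤ ({((1 : ℤ), (0 : M), -m), ((r, L, r * m) : ℤ × M × ℤ)} : Set (ℤ × M × ℤ)) := by
  exact span_v_v0_aux m B r L hv₀ hL2
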